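/- arXiv:1510.02360 — 5 statements merged into one kernel-verified Lean document; each statement's English description precedes it below -/
import Mathlib

section
/- Let G be a group, K a subgroup of G, H a subgroup of G, and F a finite subset of G. If K ⊆ H·F (i.e., every element of K can be written as h·f with h ∈ H, f ∈ F) and K ∩ H is finite, then K is finite. -/
/-- If K ⊆ H·F with F finite and K ∩ H is finite, then K is finite. -/
theorem stmt_0 {G : Type*} [Group G] (K H : Subgroup G) (F : Finset G)
    (hKF : (K : Set G) ⊆ {x | ∃ h ∈ H, ∃ f ∈ F, x = h * f})
    (hfin : ((K : Set G) ∩ (H : Set G)).Finite) :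
    (K : Set G).Finite := by
  have hsub : (K : Set G) ⊆ ⋃ f ∈ F, {x | x ∈ K ∧ x * f⁻¹ ∈ H} := by
    intro x hx
    obtain ⟨h, hh, f, hf, rfl⟩ := hKF hx
    exact Set.mem_biUnion hf ⟨hx, by simpa using hh⟩
  apply Set.Finite.subset _ hsub
  apply Set.Finite.biUnion F.finite_toSet
  intro f _
  rcases Set.eq_empty_or_nonempty {x | x ∈ K ∧ x * f⁻¹ ∈ H} with h0 | ⟨k₀, hk₀⟩
  · simp [h0]
  · apply Set.Finite.of_finite_image (f := fun x => x * k₀⁻¹)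
    · apply hfin.subset
      rintro y ⟨x, ⟨hxK, hxH⟩, rfl⟩
      refine ⟨mul_mem hxK (inv_mem hk₀.1), ?_⟩
      have hx : x * k₀⁻¹ = (x * f⁻¹) * (k₀ * f⁻¹)⁻¹ := by group
      show x * k₀⁻¹ ∈ (H : Set G); rw [hx]; exact mul_mem hxH (inv_mem hk₀.2)
    · exact (mul_left_injective _).injOn
end

section
/- Let z : ℤⁿ → (ℤ/3ℤ)ⁿ be defined by z(p) = (p₁ mod 3, …, pₙ mod 3), and let Z be the orbit of z under the shift action of ℤⁿ (which has exactly 3ⁿ elements). If φ is an automorphism of ℤⁿ with φ(e_i) = ±e_i for each i, and the configuration p ↦ z(φ(p)) lies in Z, then φ(e_i) = e_i for all i, i.e., φ is the identity. -/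
/-- Let z(p) = (p₁ mod 3, …, pₙ mod 3) and Z its orbit under the shift
(g • x)(h) = x(h − g). If φ is an automorphism of ℤⁿ with φ(e_i) = ±e_i and
p ↦ z(φ(p)) lies in Z, then φ(e_i) = e_i for all i. -/
theorem stmt_12 {n : ℕ} (φ : (Fin n → ℤ) ≃+ (Fin n → ℤ))
    (hpm : ∀ i : Fin n, φ (Pi.single i 1) = Pi.single i 1 ∨
      φ (Pi.single i 1) = -Pi.single i 1)
    (hZ : ∃ g : Fin n → ℤ,
      (fun p (i : Fin n) => ((φ p i : ℤ) : ZMod 3)) =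
        (fun p (i : Fin n) => (((p - g) i : ℤ) : ZMod 3))) :
    ∀ i : Fin n, φ (Pi.single i 1) = Pi.single i 1 := by
  obtain ⟨g, heq⟩ := hZ
  intro i
  rcases hpm i with h | h
  · exact h
  · exfalso
    have h0 := congrFun (congrFun heq 0) i
    have h1 := congrFun (congrFun heq (Pi.single i 1)) i
    simp [map_zero] at h0
    rw [h] at h1
    simp [Pi.single_eq_same, sub_eq_add_neg] at h1
    rw [show ((g i : ℤ) : ZMod 3) = 0 from h0] at h1
    norm_num at h1
    exact (by decide : ((-1 : ZMod 3)) ≠ 1) h1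
end

section
/- Let G be a group, H ≤ G, A a finite set, and 𝒫 a set of patterns with supports contained in H. Let X be the subshift of A^H defined by 𝒫 and Y the subshift of A^G defined by the same patterns. If K is a left transversal of H in G and (x^k)_{k∈K} is any family of points of X, then the configuration y defined by y(k·h) = x^k(h) belongs to Y. In particular, Y is nonempty if X is nonempty. -/
/-- A pattern: a finitely supported partial function, encoded by its finite
support and values. -/
structure Pattern (G A : Type*) where
  supp : Finset G
  val : G → A

/-- Gluing points of the H-subshift X along a left transversal of H in G gives
a point of the G-subshift Y defined by the same patterns; in particular Y is
nonempty whenever X is. -/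
theorem stmt_17 {G A : Type*} [Group G] [Finite A] (H : Subgroup G)
    (Pats : Set (Pattern H A)) (K : Set G)
    (htrans : ∀ g : G, ∃! kh : K × H, g = (kh.1 : G) * (kh.2 : G))
    (x : K → (H → A))
    (hx : ∀ k : K, x k ∈ {z : H → A | ∀ h : H, ∀ P ∈ Pats,
      ∃ p ∈ P.supp, z (h⁻¹ * p) ≠ P.val p})
    (y : G → A)
    (hy : ∀ (k : K) (h : H), y ((k : G) * (h : G)) = x k h) :
    y ∈ {y' : G → A | ∀ g : G, ∀ P ∈ Pats,
        ∃ p ∈ P.supp, y' (g⁻¹ * (p : G)) ≠ P.val p} ∧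
    ({z : H → A | ∀ h : H, ∀ P ∈ Pats,
        ∃ p ∈ P.supp, z (h⁻¹ * p) ≠ P.val p}.Nonempty →
      {y' : G → A | ∀ g : G, ∀ P ∈ Pats,
        ∃ p ∈ P.supp, y' (g⁻¹ * (p : G)) ≠ P.val p}.Nonempty) := by
  have hmain : y ∈ {y' : G → A | ∀ g : G, ∀ P ∈ Pats,
      ∃ p ∈ P.supp, y' (g⁻¹ * (p : G)) ≠ P.val p} := by
    intro g P hP
    obtain ⟨⟨k, h⟩, hkh, -⟩ := htrans g⁻¹
    obtain ⟨p, hp, hne⟩ := hx k h⁻¹ P hP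
    refine ⟨p, hp, ?_⟩
    have : g⁻¹ * (p : G) = (k : G) * ((h * p : H) : G) := by
      rw [hkh]; push_cast; group
    rw [this, hy k (h * p)]
    simpa using hne
  exact ⟨hmain, fun _ => ⟨y, hmain⟩⟩
end

section
/- Let G be a group, H ≤ G, A a finite set, and 𝒫 a set of patterns with supports in H defining subshifts X ⊆ A^H and Y ⊆ A^G. Then for every y ∈ Y there exists x ∈ X such that Stab(y) ∩ H ⊆ Stab(x), where stabilizers are taken for the respective shift actions. In particular, if every point of X has trivial stabilizer in H, then every y ∈ Y satisfies Stab(y) ∩ H = {1}. -/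
/-- For every y in the G-subshift Y there is x in the H-subshift X with
Stab(y) ∩ H ⊆ Stab(x); in particular if every point of X has trivial
stabilizer then Stab(y) ∩ H is trivial for every y ∈ Y. -/
theorem stmt_18 {G A : Type*} [Group G] [Finite A] (H : Subgroup G)
    (Pats : Set (Pattern H A)) :
    (∀ y ∈ {y' : G → A | ∀ g : G, ∀ P ∈ Pats,
        ∃ p ∈ P.supp, y' (g⁻¹ * (p : G)) ≠ P.val p},
      ∃ x ∈ {z : H → A | ∀ h : H, ∀ P ∈ Pats,
        ∃ p ∈ P.supp, z (h⁻¹ * p) ≠ P.val p},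
      ∀ h : H, (fun g => y ((h : G)⁻¹ * g)) = y →
        (fun p => x (h⁻¹ * p)) = x) ∧
    ((∀ x ∈ {z : H → A | ∀ h : H, ∀ P ∈ Pats,
        ∃ p ∈ P.supp, z (h⁻¹ * p) ≠ P.val p},
        ∀ h : H, (fun p => x (h⁻¹ * p)) = x → h = 1) →
      ∀ y ∈ {y' : G → A | ∀ g : G, ∀ P ∈ Pats,
        ∃ p ∈ P.supp, y' (g⁻¹ * (p : G)) ≠ P.val p},
        ∀ h : H, (fun g => y ((h : G)⁻¹ * g)) = y → h = 1) := by
  constructor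
  · intro y hy
    refine ⟨fun p => y p, ?_, ?_⟩
    · intro h P hP
      obtain ⟨p, hp, hne⟩ := hy (h : G) P hP
      exact ⟨p, hp, by simpa using hne⟩
    · intro h hst
      funext p
      simp only []
      have := congrFun hst (p : G)
      simpa using this
  · intro hX y hy h hst
    obtain ⟨x, hxX, hx⟩ : ∃ x ∈ {z : H → A | ∀ h : H, ∀ P ∈ Pats,
        ∃ p ∈ P.supp, z (h⁻¹ * p) ≠ P.val p},
        ∀ h : H, (fun g => y ((h : G)⁻¹ * g)) = y →
        (fun p => x (h⁻¹ * p)) = x := by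
      refine ⟨fun p => y p, ?_, ?_⟩
      · intro h P hP
        obtain ⟨p, hp, hne⟩ := hy (h : G) P hP
        exact ⟨p, hp, by simpa using hne⟩
      · intro h hst
        funext p
        have := congrFun hst (p : G)
        simpa using this
    exact hX x hxX h (hx h hst)
end

section
/- Let G be a group containing finitely generated subgroups H₁ ⊆ H₂ with H₁ normal in G. Suppose for each point of some G-invariant nonempty set Y₁ ⊆ A₁^G the stabilizer is contained in H₁·F for a fixed finite set F, and for each point of some G-invariant nonempty set Y₂ ⊆ A₂^G the stabilizer intersects H₂ in a finite set. Then every point of Y₁ × Y₂ ⊆ (A₁ × A₂)^G (with the diagonal action) has finite stabilizer. -/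
/-- If stabilizers of points of Y₁ lie in H₁·F (F finite) and stabilizers of
points of Y₂ meet H₂ ⊇ H₁ in a finite set, then every point of Y₁ × Y₂ has
finite stabilizer under the diagonal shift action. -/
theorem stmt_19 {G A₁ A₂ : Type*} [Group G] (H₁ H₂ : Subgroup G)
    (hle : H₁ ≤ H₂) [H₁.Normal] (hfg1 : H₁.FG) (hfg2 : H₂.FG)
    (F : Finset G) (Y₁ : Set (G → A₁)) (Y₂ : Set (G → A₂))
    (hY₁ne : Y₁.Nonempty) (hY₂ne : Y₂.Nonempty)
    (hY₁inv : ∀ g : G, ∀ y ∈ Y₁, (fun h => y (g⁻¹ * h)) ∈ Y₁)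
    (hY₂inv : ∀ g : G, ∀ y ∈ Y₂, (fun h => y (g⁻¹ * h)) ∈ Y₂)
    (hstab₁ : ∀ y ∈ Y₁, {g : G | (fun h => y (g⁻¹ * h)) = y} ⊆
      {x : G | ∃ h ∈ H₁, ∃ f ∈ F, x = h * f})
    (hstab₂ : ∀ y ∈ Y₂, ({g : G | (fun h => y (g⁻¹ * h)) = y} ∩ (H₂ : Set G)).Finite) :
    ∀ y₁ ∈ Y₁, ∀ y₂ ∈ Y₂,
      {g : G | (fun h => y₁ (g⁻¹ * h)) = y₁ ∧ (fun h => y₂ (g⁻¹ * h)) = y₂}.Finite := by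
  intro y₁ hy₁ y₂ hy₂
  set S : Set G :=
    {g : G | (fun h => y₁ (g⁻¹ * h)) = y₁ ∧ (fun h => y₂ (g⁻¹ * h)) = y₂} with hSdef
  -- S is closed under a * b⁻¹
  have hmul : ∀ a ∈ S, ∀ b ∈ S, a * b⁻¹ ∈ S := by
    rintro a ⟨ha1, ha2⟩ b ⟨hb1, hb2⟩
    constructor
    · funext h
      have h1 := congrFun hb1 (b * (a⁻¹ * h))
      have h2 := congrFun ha1 h
      simp only [mul_inv_rev, inv_inv, mul_assoc, inv_mul_cancel_left] at h1 h2 ⊢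
      rw [← h1, h2]
    · funext h
      have h1 := congrFun hb2 (b * (a⁻¹ * h))
      have h2 := congrFun ha2 h
      simp only [mul_inv_rev, inv_inv, mul_assoc, inv_mul_cancel_left] at h1 h2 ⊢
      rw [← h1, h2]
  have hT : (S ∩ (H₂ : Set G)).Finite :=
    (hstab₂ y₂ hy₂).subset (by rintro g ⟨⟨_, h2⟩, hH⟩; exact ⟨h2, hH⟩)
  have hsub : S ⊆ ⋃ f ∈ F, {g ∈ S | ∃ h ∈ H₁, g = h * f} := by
    intro g hg
    obtain ⟨h, hh, f, hf, hgf⟩ := hstab₁ y₁ hy₁ hg.1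
    exact Set.mem_biUnion hf ⟨hg, h, hh, hgf⟩
  refine Set.Finite.subset (Set.Finite.biUnion F.finite_toSet fun f _ => ?_) hsub
  by_cases hne : ({g ∈ S | ∃ h ∈ H₁, g = h * f} : Set G).Nonempty
  · obtain ⟨g₀, hg₀S, h₀, hh₀, hg₀⟩ := hne
    refine Set.Finite.subset (hT.image (fun x => x * g₀)) ?_
    rintro g ⟨hgS, h, hh, rfl⟩
    refine ⟨(h * f) * g₀⁻¹, ⟨hmul _ hgS _ hg₀S, ?_⟩, by group⟩
    have : (h * f) * g₀⁻¹ = h * h₀⁻¹ := by rw [hg₀]; group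
    rw [this]
    exact hle (H₁.mul_mem hh (H₁.inv_mem hh₀))
  · rw [Set.not_nonempty_iff_eq_empty] at hne
    simp [hne]
end
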